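/- Let a > 0, γ > 0, 0 < β < 1, and set Γ(x,t) = x - t^β. Let f be a Schwartz function on ℝ such that for almost every x ∈ ℝ, lim_{t→0⁺} t^{-min{β,γ}} (P_{a,γ}^t f(Γ(x,t)) - f(x)) = 0. Then f ≡ 0. -/

import Mathlib

open MeasureTheory Filter

/-- The Fourier transform `f̂(ξ) = ∫ f(y) e^{-iξy} dy`. -/
noncomputable def fhat (f : ℝ → ℂ) (ξ : ℝ) : ℂ :=
  ∫ y : ℝ, f y * Complex.exp (-(Complex.I * (ξ : ℂ) * (y : ℂ)))

/-- The Landau type Schrödinger operator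
`P_{a,γ}^t f(x) = (1/2π) ∫ f̂(ξ) e^{ixξ} e^{it|ξ|^a} e^{-t^γ|ξ|^a} dξ`. -/
noncomputable def landau (a γ : ℝ) (f : ℝ → ℂ) (t x : ℝ) : ℂ :=
  (1 / (2 * Real.pi)) *
    ∫ ξ : ℝ, fhat f ξ * Complex.exp (Complex.I * (x : ℂ) * (ξ : ℂ)) *
      Complex.exp (Complex.I * ((t * |ξ| ^ a : ℝ) : ℂ)) *
      Complex.exp (-((t ^ γ * |ξ| ^ a : ℝ) : ℂ))

open Complex FourierTransform Real

/-! ### Auxiliary lemmas -/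

lemma srrc_exp_bound {z : ℂ} (hz : z.re ≤ 0) : ‖Complex.exp z - 1‖ ≤ ‖z‖ := by
  have hf : ∀ s ∈ Set.Icc (0:ℝ) 1, HasDerivWithinAt (fun s : ℝ => Complex.exp ((s : ℂ) * z))
      (z * Complex.exp ((s : ℂ) * z)) (Set.Icc 0 1) s := by
    intro s _
    have h1 : HasDerivAt (fun s : ℝ => (s : ℂ) * z) z s := by
      simpa using (Complex.ofRealCLM.hasDerivAt (x := s)).mul_const z
    simpa [mul_comm] using (h1.cexp).hasDerivWithinAt
  have hb : ∀ s ∈ Set.Icc (0:ℝ) 1, ‖z * Complex.exp ((s : ℂ) * z)‖ ≤ ‖z‖ := by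
    intro s hs
    rw [norm_mul, Complex.norm_exp]
    have h0 : ((s : ℂ) * z).re = s * z.re := by simp
    rw [h0]
    have h1 : Real.exp (s * z.re) ≤ 1 := by
      rw [Real.exp_le_one_iff]
      exact mul_nonpos_of_nonneg_of_nonpos hs.1 hz
    nlinarith [norm_nonneg z, Real.exp_pos (s * z.re)]
  have := norm_image_sub_le_of_norm_deriv_le_segment_01' hf
    (fun s hs => hb s ⟨hs.1, hs.2.le⟩)
  simpa using this

noncomputable def srrcEps (r : ℝ) : ℝ := if r = 0 then 1 else 0

lemma srrc_tendsto_rpow0 {c : ℝ} (hc : 0 ≤ c) :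
    Tendsto (fun t : ℝ => t ^ c) (nhdsWithin 0 (Set.Ioi 0)) (nhds (srrcEps c)) := by
  unfold srrcEps
  rcases eq_or_lt_of_le hc with h | h
  · simp only [← h, if_pos rfl, Real.rpow_zero]
    exact tendsto_const_nhds
  · rw [if_neg h.ne']
    have h1 : ContinuousAt (fun t : ℝ => t ^ c) 0 :=
      Real.continuousAt_rpow_const 0 c (Or.inr hc)
    have h2 : Tendsto (fun t : ℝ => t ^ c) (nhdsWithin 0 (Set.Ioi 0)) (nhds ((0:ℝ) ^ c)) :=
      h1.tendsto.mono_left nhdsWithin_le_nhds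
    simpa [Real.zero_rpow h.ne'] using h2

lemma srrc_exp_slope : Tendsto (fun z : ℂ => (Complex.exp z - 1) / z)
    (nhdsWithin 0 {(0:ℂ)}ᶜ) (nhds 1) := by
  have h := Complex.hasDerivAt_exp 0
  rw [hasDerivAt_iff_tendsto_slope] at h
  have he : (slope Complex.exp 0) = fun z : ℂ => (Complex.exp z - 1) / z := by
    funext z
    rw [slope_def_field]
    simp [Complex.exp_zero]
  rw [he, Complex.exp_zero] at h
  exact h

lemma srrc_fhat_eq (f : ℝ → ℂ) (ξ : ℝ) :
    fhat f ξ = 𝓕 f (ξ / (2 * Real.pi)) := by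
  rw [Real.fourier_real_eq_integral_exp_smul]
  unfold fhat
  congr 1
  funext v
  rw [smul_eq_mul, mul_comm]
  congr 1
  have hπ : (2 * Real.pi) ≠ 0 := by positivity
  have h0 : (-2 * Real.pi * v * (ξ / (2 * Real.pi)) : ℝ) = -(ξ * v) := by
    field_simp
  rw [h0]
  push_cast
  ring_nf

lemma srrc_cont_abs_rpow {a : ℝ} (ha : 0 < a) : Continuous (fun ξ : ℝ => |ξ| ^ a) := by
  rw [continuous_iff_continuousAt]
  intro ξ
  exact (Real.continuousAt_rpow_const |ξ| a (Or.inr ha.le)).comp continuous_abs.continuousAt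

lemma srrc_fourier_cont {g : ℝ → ℂ} (hg : Integrable g) :
    Continuous (𝓕 g) :=
  VectorFourier.fourierIntegral_continuous (L := innerₗ ℝ) Real.continuous_fourierChar
    (by exact continuous_inner) hg

lemma srrc_fhat_cont (f : SchwartzMap ℝ ℂ) : Continuous (fhat ⇑f) := by
  have h : fhat ⇑f = fun ξ => 𝓕 ⇑f (ξ / (2 * Real.pi)) :=
    funext (srrc_fhat_eq ⇑f)
  rw [h]
  exact (srrc_fourier_cont f.integrable).comp (continuous_id.div_const _)

lemma srrc_master (f : SchwartzMap ℝ ℂ) (n : ℕ) :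
    Integrable (fun ξ : ℝ => ‖fhat ⇑f ξ‖ * (1 + |ξ| ^ n)) := by
  set g : SchwartzMap ℝ ℂ := FourierTransform.fourierCLE ℂ (SchwartzMap ℝ ℂ) f with hgdef
  have hgf : ⇑g = 𝓕 ⇑f := by
    rw [hgdef, FourierTransform.fourierCLE_apply, SchwartzMap.fourier_coe]
  have hπ : (0:ℝ) < 2 * Real.pi := by positivity
  have hF : Integrable (fun u : ℝ => ‖g u‖ + (2*Real.pi)^n * (‖u‖^n * ‖g u‖)) :=
    g.integrable.norm.add ((g.integrable_pow_mul volume n).const_mul _)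
  have hcomp := hF.comp_div (R := 2*Real.pi) hπ.ne'
  refine hcomp.congr (Filter.Eventually.of_forall fun ξ => ?_)
  have h2 : fhat ⇑f ξ = g (ξ / (2*Real.pi)) := by
    rw [hgf]; exact srrc_fhat_eq ⇑f ξ
  dsimp only
  rw [h2]
  have h1 : ‖(ξ / (2*Real.pi) : ℝ)‖ = |ξ| / (2*Real.pi) := by
    rw [Real.norm_eq_abs, abs_div, abs_of_pos hπ]
  rw [h1, div_pow]
  have hne : ((2*Real.pi)^n : ℝ) ≠ 0 := by positivity
  field_simp

lemma srrc_poly_bound {a : ℝ} (ha : 0 < a) (ξ : ℝ) :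
    |ξ| + 2 * |ξ| ^ a ≤ 3 * (1 + |ξ| ^ (max 1 ⌈a⌉₊)) := by
  set n := max 1 ⌈a⌉₊ with hn
  have hp : (0:ℝ) ≤ |ξ| ^ n := pow_nonneg (abs_nonneg ξ) n
  have h1 : |ξ| ^ a ≤ 1 + |ξ| ^ n := by
    rcases le_or_gt |ξ| 1 with hle | hgt
    · have := Real.rpow_le_one (abs_nonneg ξ) hle ha.le
      linarith
    · have han : a ≤ (n : ℝ) := by
        refine (Nat.le_ceil a).trans ?_
        exact_mod_cast Nat.cast_le.2 (le_max_right 1 ⌈a⌉₊)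
      have := Real.rpow_le_rpow_of_exponent_le hgt.le han
      rw [Real.rpow_natCast] at this
      linarith
  have h2 : |ξ| ≤ 1 + |ξ| ^ n := by
    rcases le_or_gt |ξ| 1 with hle | hgt
    · linarith
    · have : |ξ| ^ 1 ≤ |ξ| ^ n := pow_le_pow_right₀ hgt.le (le_max_left 1 ⌈a⌉₊)
      rw [pow_one] at this
      linarith
  linarith

lemma srrc_inversion (f : SchwartzMap ℝ ℂ) (x : ℝ) :
    ∫ ξ : ℝ, fhat ⇑f ξ * Complex.exp (Complex.I * (x:ℂ) * (ξ:ℂ))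
      = ((2 * Real.pi : ℝ) : ℂ) * f x := by
  have hπ : (0:ℝ) < 2 * Real.pi := by positivity
  have hg : Integrable (𝓕 ⇑f) := by
    have := SchwartzMap.integrable (FourierTransform.fourierCLE ℂ (SchwartzMap ℝ ℂ) f) (μ := volume)
    rwa [FourierTransform.fourierCLE_apply] at this
  set Φ : ℝ → ℂ := fun u =>
    Complex.exp (((2 * Real.pi * u * x : ℝ) : ℂ) * Complex.I) • 𝓕 ⇑f u
    with hΦ
  have key : ∀ ξ : ℝ, fhat ⇑f ξ * Complex.exp (Complex.I * (x:ℂ) * (ξ:ℂ))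
      = Φ (ξ / (2 * Real.pi)) := by
    intro ξ
    rw [hΦ]
    simp only [smul_eq_mul]
    rw [← srrc_fhat_eq, mul_comm]
    congr 2
    have h0 : (2 * Real.pi * (ξ / (2 * Real.pi)) * x : ℝ) = ξ * x := by field_simp
    rw [h0]; push_cast; ring
  rw [show (fun ξ : ℝ => fhat ⇑f ξ * Complex.exp (Complex.I * (x:ℂ) * (ξ:ℂ)))
      = fun ξ : ℝ => Φ (ξ / (2 * Real.pi)) from funext key]
  rw [MeasureTheory.Measure.integral_comp_div Φ (2*Real.pi)]
  have hinv : 𝓕⁻ (𝓕 ⇑f) x = f x := by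
    rw [f.continuous.fourierInv_fourier_eq f.integrable hg]
  have heq : 𝓕⁻ (𝓕 ⇑f) x = ∫ u, Φ u := by
    rw [Real.fourierInv_eq_fourier_neg,
      Real.fourier_real_eq_integral_exp_smul]
    congr 1; funext v; rw [hΦ]
    congr 2
    push_cast; ring
  rw [← heq, hinv, abs_of_pos hπ, Complex.real_smul]

/-! ### The phase function and its limit -/

noncomputable def srrcZ (a γ β : ℝ) (t ξ : ℝ) : ℂ :=
  Complex.I * ((t * |ξ| ^ a - t ^ β * ξ : ℝ) : ℂ) - ((t ^ γ * |ξ| ^ a : ℝ) : ℂ)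

noncomputable def srrcLim (a γ β : ℝ) (ξ : ℝ) : ℂ :=
  Complex.I * ((srrcEps (1 - min β γ) * |ξ| ^ a - srrcEps (β - min β γ) * ξ : ℝ) : ℂ)
    - ((srrcEps (γ - min β γ) * |ξ| ^ a : ℝ) : ℂ)

lemma srrcZ_re (a γ β t ξ : ℝ) : (srrcZ a γ β t ξ).re = -(t ^ γ * |ξ| ^ a) := by
  simp [srrcZ]

lemma srrcZ_ne_zero {a γ β t ξ : ℝ} (ha : 0 < a) (ht : 0 < t) (hξ : ξ ≠ 0) :
    srrcZ a γ β t ξ ≠ 0 := by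
  intro h0
  have h1 : 0 < t ^ γ * |ξ| ^ a :=
    mul_pos (Real.rpow_pos_of_pos ht γ) (Real.rpow_pos_of_pos (abs_pos.2 hξ) a)
  have h2 := srrcZ_re a γ β t ξ
  rw [h0] at h2
  simp only [Complex.zero_re] at h2
  linarith

lemma srrcZ_norm_le {a γ β : ℝ} {t : ℝ} (ht : 0 ≤ t) (ξ : ℝ) :
    ‖srrcZ a γ β t ξ‖ ≤ t * |ξ| ^ a + t ^ β * |ξ| + t ^ γ * |ξ| ^ a := by
  have hra : (0:ℝ) ≤ |ξ| ^ a := Real.rpow_nonneg (abs_nonneg ξ) a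
  have hrβ : (0:ℝ) ≤ t ^ β := Real.rpow_nonneg ht β
  have hrγ : (0:ℝ) ≤ t ^ γ := Real.rpow_nonneg ht γ
  calc ‖srrcZ a γ β t ξ‖
      ≤ ‖Complex.I * ((t * |ξ| ^ a - t ^ β * ξ : ℝ) : ℂ)‖ + ‖((t ^ γ * |ξ| ^ a : ℝ) : ℂ)‖ :=
        norm_sub_le _ _
    _ = |t * |ξ| ^ a - t ^ β * ξ| + |t ^ γ * |ξ| ^ a| := by
        rw [norm_mul, Complex.norm_I, one_mul, Complex.norm_real, Complex.norm_real,
          Real.norm_eq_abs, Real.norm_eq_abs]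
    _ ≤ (t * |ξ| ^ a + t ^ β * |ξ|) + t ^ γ * |ξ| ^ a := by
        gcongr ?_ + ?_
        · calc |t * |ξ| ^ a - t ^ β * ξ| ≤ |t * |ξ| ^ a| + |t ^ β * ξ| := abs_sub _ _
            _ = t * |ξ| ^ a + t ^ β * |ξ| := by
              rw [abs_mul, abs_mul, _root_.abs_of_nonneg ht, _root_.abs_of_nonneg hra,
                _root_.abs_of_nonneg hrβ]
        · exact le_of_eq (_root_.abs_of_nonneg (mul_nonneg hrγ hra))
    _ = t * |ξ| ^ a + t ^ β * |ξ| + t ^ γ * |ξ| ^ a := by ring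

lemma srrcLim_norm_le {a γ β : ℝ} (ξ : ℝ) :
    ‖srrcLim a γ β ξ‖ ≤ |ξ| + 2 * |ξ| ^ a := by
  have hra : (0:ℝ) ≤ |ξ| ^ a := Real.rpow_nonneg (abs_nonneg ξ) a
  have heps : ∀ r : ℝ, 0 ≤ srrcEps r ∧ srrcEps r ≤ 1 := by
    intro r; unfold srrcEps; split <;> norm_num
  calc ‖srrcLim a γ β ξ‖
      ≤ ‖Complex.I * ((srrcEps (1 - min β γ) * |ξ| ^ a - srrcEps (β - min β γ) * ξ : ℝ) : ℂ)‖
        + ‖((srrcEps (γ - min β γ) * |ξ| ^ a : ℝ) : ℂ)‖ := norm_sub_le _ _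
    _ = |srrcEps (1 - min β γ) * |ξ| ^ a - srrcEps (β - min β γ) * ξ|
        + |srrcEps (γ - min β γ) * |ξ| ^ a| := by
        rw [norm_mul, Complex.norm_I, one_mul, Complex.norm_real, Complex.norm_real,
          Real.norm_eq_abs, Real.norm_eq_abs]
    _ ≤ (|ξ| ^ a + |ξ|) + |ξ| ^ a := by
        gcongr ?_ + ?_
        · calc |srrcEps (1 - min β γ) * |ξ| ^ a - srrcEps (β - min β γ) * ξ|
              ≤ |srrcEps (1 - min β γ) * |ξ| ^ a| + |srrcEps (β - min β γ) * ξ| := abs_sub _ _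
            _ ≤ |ξ| ^ a + |ξ| := by
              rw [abs_mul, abs_mul]
              gcongr ?_ + ?_
              · rw [_root_.abs_of_nonneg (heps _).1, _root_.abs_of_nonneg hra]
                exact mul_le_of_le_one_left hra (heps _).2
              · rw [_root_.abs_of_nonneg (heps _).1]
                exact mul_le_of_le_one_left (abs_nonneg ξ) (heps _).2
        · rw [abs_mul, _root_.abs_of_nonneg (heps _).1, _root_.abs_of_nonneg hra]
          exact mul_le_of_le_one_left hra (heps _).2
    _ = |ξ| + 2 * |ξ| ^ a := by ring

lemma srrcLim_ne_zero {a γ β : ℝ} (ha : 0 < a) (hβ0 : 0 < β) (hβ1 : β < 1) (hγ : 0 < γ)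
    {ξ : ℝ} (hξ : ξ ≠ 0) : srrcLim a γ β ξ ≠ 0 := by
  intro h0
  have hre : (srrcLim a γ β ξ).re = -(srrcEps (γ - min β γ) * |ξ| ^ a) := by
    simp [srrcLim]
  have him : (srrcLim a γ β ξ).im
      = srrcEps (1 - min β γ) * |ξ| ^ a - srrcEps (β - min β γ) * ξ := by
    simp [srrcLim]
  have hrapos : (0:ℝ) < |ξ| ^ a := Real.rpow_pos_of_pos (abs_pos.2 hξ) a
  rcases le_total β γ with hbg | hgb
  · -- min = β, so β - min = 0, eps = 1 ; 1 - min > 0 so eps = 0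
    have h1 : srrcEps (β - min β γ) = 1 := by
      rw [min_eq_left hbg, sub_self]; simp [srrcEps]
    have h2 : srrcEps (1 - min β γ) = 0 := by
      have hlt : min β γ < 1 := lt_of_le_of_lt (min_le_left β γ) hβ1
      have hne : (1 : ℝ) - min β γ ≠ 0 := by linarith
      simp [srrcEps, hne]
    rw [h0] at him
    simp [h1, h2] at him
    exact hξ him
  · have h1 : srrcEps (γ - min β γ) = 1 := by
      rw [min_eq_right hgb, sub_self]; simp [srrcEps]
    rw [h0] at hre
    simp [h1] at hre
    exact absurd hre (by positivity)

lemma srrcLim_cont {a γ β : ℝ} (ha : 0 < a) : Continuous (srrcLim a γ β) := by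
  unfold srrcLim
  apply Continuous.sub
  · exact continuous_const.mul (Complex.continuous_ofReal.comp
      ((continuous_const.mul (srrc_cont_abs_rpow ha)).sub
        (continuous_const.mul continuous_id)))
  · exact Complex.continuous_ofReal.comp (continuous_const.mul (srrc_cont_abs_rpow ha))

/-! ### Tendsto lemmas -/

lemma srrc_tendsto_ofReal {g : ℝ → ℝ} {l : Filter ℝ} {c : ℝ} (h : Tendsto g l (nhds c)) :
    Tendsto (fun t => ((g t : ℝ) : ℂ)) l (nhds ((c : ℝ) : ℂ)) :=
  (Complex.continuous_ofReal.tendsto c).comp h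

lemma srrcZ_tendsto_zero {a γ β : ℝ} (hβ0 : 0 < β) (hγ : 0 < γ) (ξ : ℝ) :
    Tendsto (fun t => srrcZ a γ β t ξ) (nhdsWithin 0 (Set.Ioi 0)) (nhds 0) := by
  have ht1 : Tendsto (fun t : ℝ => t) (nhdsWithin 0 (Set.Ioi 0)) (nhds 0) :=
    tendsto_id.mono_left nhdsWithin_le_nhds
  have htβ : Tendsto (fun t : ℝ => t ^ β) (nhdsWithin 0 (Set.Ioi 0)) (nhds 0) := by
    have := srrc_tendsto_rpow0 hβ0.le
    rwa [show srrcEps β = 0 by simp [srrcEps, hβ0.ne']] at this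
  have htγ : Tendsto (fun t : ℝ => t ^ γ) (nhdsWithin 0 (Set.Ioi 0)) (nhds 0) := by
    have := srrc_tendsto_rpow0 hγ.le
    rwa [show srrcEps γ = 0 by simp [srrcEps, hγ.ne']] at this
  have h1 : Tendsto (fun t : ℝ => t * |ξ| ^ a - t ^ β * ξ) (nhdsWithin 0 (Set.Ioi 0))
      (nhds 0) := by
    have := (ht1.mul_const (|ξ| ^ a)).sub (htβ.mul_const ξ)
    simpa using this
  have h2 : Tendsto (fun t : ℝ => t ^ γ * |ξ| ^ a) (nhdsWithin 0 (Set.Ioi 0)) (nhds 0) := by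
    have := htγ.mul_const (|ξ| ^ a)
    simpa using this
  have := (tendsto_const_nhds (x := Complex.I)).mul (srrc_tendsto_ofReal h1) |>.sub
    (srrc_tendsto_ofReal h2)
  simpa [srrcZ] using this

lemma srrcZ_div_tendsto {a γ β : ℝ} (hβ0 : 0 < β) (hβ1 : β < 1) (hγ : 0 < γ) (ξ : ℝ) :
    Tendsto (fun t => srrcZ a γ β t ξ / ((t ^ min β γ : ℝ) : ℂ))
      (nhdsWithin 0 (Set.Ioi 0)) (nhds (srrcLim a γ β ξ)) := by
  set m := min β γ with hm
  have hmβ : m ≤ β := min_le_left _ _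
  have hmγ : m ≤ γ := min_le_right _ _
  have hm1 : m ≤ 1 := hmβ.trans hβ1.le
  -- limit of the explicit rpow form
  have hW : Tendsto (fun t : ℝ => Complex.I *
      ((t ^ (1 - m) * |ξ| ^ a - t ^ (β - m) * ξ : ℝ) : ℂ)
      - ((t ^ (γ - m) * |ξ| ^ a : ℝ) : ℂ)) (nhdsWithin 0 (Set.Ioi 0))
      (nhds (srrcLim a γ β ξ)) := by
    have h1 : Tendsto (fun t : ℝ => t ^ (1 - m) * |ξ| ^ a - t ^ (β - m) * ξ)
        (nhdsWithin 0 (Set.Ioi 0))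
        (nhds (srrcEps (1 - m) * |ξ| ^ a - srrcEps (β - m) * ξ)) :=
      ((srrc_tendsto_rpow0 (by linarith)).mul_const _).sub
        ((srrc_tendsto_rpow0 (by linarith)).mul_const _)
    have h2 : Tendsto (fun t : ℝ => t ^ (γ - m) * |ξ| ^ a) (nhdsWithin 0 (Set.Ioi 0))
        (nhds (srrcEps (γ - m) * |ξ| ^ a)) :=
      (srrc_tendsto_rpow0 (by linarith)).mul_const _
    exact ((tendsto_const_nhds (x := Complex.I)).mul (srrc_tendsto_ofReal h1)).sub
      (srrc_tendsto_ofReal h2)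
  refine hW.congr' ?_
  filter_upwards [self_mem_nhdsWithin] with t ht
  have ht0 : (0:ℝ) < t := ht
  have htm : (t ^ m : ℝ) ≠ 0 := (Real.rpow_pos_of_pos ht0 m).ne'
  have e1 : (t ^ (1 - m) : ℝ) = t / t ^ m := by
    rw [Real.rpow_sub ht0, Real.rpow_one]
  have e2 : (t ^ (β - m) : ℝ) = t ^ β / t ^ m := Real.rpow_sub ht0 β m
  have e3 : (t ^ (γ - m) : ℝ) = t ^ γ / t ^ m := Real.rpow_sub ht0 γ m
  have r1 : (t ^ (1 - m) * |ξ| ^ a - t ^ (β - m) * ξ : ℝ)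
      = (t * |ξ| ^ a - t ^ β * ξ) / t ^ m := by
    rw [e1, e2]; ring
  have r2 : (t ^ (γ - m) * |ξ| ^ a : ℝ) = (t ^ γ * |ξ| ^ a) / t ^ m := by
    rw [e3]; ring
  rw [r1, r2, srrcZ]
  push_cast
  ring

lemma srrc_exp_combine (a γ β x t ξ : ℝ) :
    Complex.exp (Complex.I * ((x - t ^ β : ℝ) : ℂ) * (ξ : ℂ))
      * Complex.exp (Complex.I * ((t * |ξ| ^ a : ℝ) : ℂ))
      * Complex.exp (-((t ^ γ * |ξ| ^ a : ℝ) : ℂ))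
    = Complex.exp (Complex.I * (x : ℂ) * (ξ : ℂ)) * Complex.exp (srrcZ a γ β t ξ) := by
  rw [← Complex.exp_add, ← Complex.exp_add, ← Complex.exp_add, srrcZ]
  congr 1
  push_cast
  ring

lemma srrc_finv_zero : 𝓕⁻ (fun _ : ℝ => (0:ℂ)) = fun _ => 0 := by
  funext w
  rw [Real.fourierInv_eq]
  simp

lemma srrc_eq_zero_of_integral {G : ℝ → ℂ} (hGc : Continuous G) (hGi : Integrable G)
    (h : ∀ᵐ x : ℝ, ∫ ξ : ℝ, G ξ * Complex.exp (Complex.I * (x:ℂ) * (ξ:ℂ)) = 0) :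
    ∀ ξ : ℝ, G ξ = 0 := by
  have hπ : (0:ℝ) < 2 * Real.pi := by positivity
  have heq : ∀ x : ℝ, 𝓕 G (-(x / (2 * Real.pi)))
      = ∫ ξ : ℝ, G ξ * Complex.exp (Complex.I * (x:ℂ) * (ξ:ℂ)) := by
    intro x
    rw [Real.fourier_real_eq_integral_exp_smul]
    congr 1
    funext v
    rw [smul_eq_mul, mul_comm]
    congr 1
    have h0 : (-2 * Real.pi * v * (-(x / (2 * Real.pi))) : ℝ) = v * x := by
      field_simp
    rw [h0]; push_cast; ring
  have hc : Continuous (fun x : ℝ => 𝓕 G (-(x / (2 * Real.pi)))) :=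
    (srrc_fourier_cont hGi).comp ((continuous_id.div_const _).neg)
  have hae : (fun x : ℝ => 𝓕 G (-(x / (2 * Real.pi))))
      =ᵐ[volume] (fun _ => 0) := by
    filter_upwards [h] with x hx
    rw [heq x]; exact hx
  have hall : (fun x : ℝ => 𝓕 G (-(x / (2 * Real.pi)))) = fun _ => 0 :=
    (hc.ae_eq_iff_eq (μ := volume) continuous_const).1 hae
  have h𝓕 : 𝓕 G = fun _ => 0 := by
    funext w
    have := congrFun hall (-(2 * Real.pi * w))
    simpa [neg_div, neg_neg, mul_div_assoc, mul_div_cancel_left₀ _ hπ.ne'] using this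
  have hint0 : Integrable (𝓕 G) := by
    rw [h𝓕]; exact integrable_zero _ _ _
  have hinv := hGc.fourierInv_fourier_eq hGi hint0
  intro ξ
  have : 𝓕⁻ (𝓕 G) ξ = G ξ := congrFun hinv ξ
  rw [h𝓕, srrc_finv_zero] at this
  exact this.symm

/-! ### Norm helpers -/

lemma srrc_norm_exp_I_mul (x ξ : ℝ) :
    ‖Complex.exp (Complex.I * (x:ℂ) * (ξ:ℂ))‖ = 1 := by
  rw [Complex.norm_exp]
  have h0 : (Complex.I * (x:ℂ) * (ξ:ℂ)).re = 0 := by simp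
  rw [h0, Real.exp_zero]

lemma srrc_norm_exp_I (r : ℝ) : ‖Complex.exp (Complex.I * (r:ℂ))‖ = 1 := by
  rw [Complex.norm_exp]
  have h0 : (Complex.I * (r:ℂ)).re = 0 := by simp
  rw [h0, Real.exp_zero]

lemma srrc_norm_exp_neg_le {r : ℝ} (hr : 0 ≤ r) : ‖Complex.exp (-(r:ℂ))‖ ≤ 1 := by
  rw [Complex.norm_exp]
  have h0 : (-(r:ℂ)).re = -r := by simp
  rw [h0, Real.exp_le_one_iff]
  linarith

/-! ### Main theorem -/

/-- With `Γ(x,t) = x - t^β`, `0 < β < 1`: if `f` is Schwartz and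
`(P_{a,γ}^t f(Γ(x,t)) - f(x))/t^{min{β,γ}} → 0` as `t → 0⁺` for a.e. `x`,
then `f ≡ 0`. -/
theorem schwartz_rate_rigidity_curve (a γ β : ℝ) (ha : 0 < a) (hγ : 0 < γ)
    (hβ0 : 0 < β) (hβ1 : β < 1) (f : SchwartzMap ℝ ℂ)
    (h : ∀ᵐ x : ℝ, Tendsto
        (fun t : ℝ =>
          (landau a γ (⇑f) t (x - t ^ β) - f x) / ((t ^ (min β γ) : ℝ) : ℂ))
        (nhdsWithin 0 (Set.Ioi 0)) (nhds 0)) :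
    ∀ x : ℝ, f x = 0 := by
  classical
  have hm0 : 0 < min β γ := lt_min hβ0 hγ
  have hmβ : min β γ ≤ β := min_le_left _ _
  have hmγ : min β γ ≤ γ := min_le_right _ _
  have hm1 : min β γ ≤ 1 := hmβ.trans hβ1.le
  have hπ : (0:ℝ) < 2 * Real.pi := by positivity
  have hMaster := srrc_master f (max 1 ⌈a⌉₊)
  have hfc : Continuous (fhat ⇑f) := srrc_fhat_cont f
  have habs : Continuous (fun ξ : ℝ => |ξ| ^ a) := srrc_cont_abs_rpow ha
  have honeple : ∀ ξ : ℝ, (1:ℝ) ≤ 1 + |ξ| ^ (max 1 ⌈a⌉₊) :=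
    fun ξ => le_add_of_nonneg_right (pow_nonneg (abs_nonneg ξ) _)
  have hfhat_int : Integrable (fhat ⇑f) := by
    refine hMaster.mono' hfc.aestronglyMeasurable (Filter.Eventually.of_forall fun ξ => ?_)
    have h1 := honeple ξ
    nlinarith [norm_nonneg (fhat ⇑f ξ)]
  have hξae : ∀ᵐ ξ : ℝ, ξ ≠ 0 := by
    have hset : {ξ : ℝ | ¬ ξ ≠ 0} = {0} := by ext ξ; simp
    rw [ae_iff, hset]
    exact measure_singleton 0
  set c : ℂ := 1 / (2 * (Real.pi : ℂ)) with hcdef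
  have hπc : (2 * (Real.pi : ℂ)) ≠ 0 := by
    simp [Complex.ofReal_ne_zero, Real.pi_ne_zero]
  have hc2π : c * ((2 * Real.pi : ℝ) : ℂ) = 1 := by
    rw [hcdef]; push_cast; field_simp
  have hc_ne : c ≠ 0 := by
    rw [hcdef]; exact one_div_ne_zero hπc
  -- the main a.e. vanishing of the limiting integral
  have hae : ∀ᵐ x : ℝ, ∫ ξ : ℝ,
      (fhat ⇑f ξ * srrcLim a γ β ξ) * Complex.exp (Complex.I * (x:ℂ) * (ξ:ℂ)) = 0 := by
    filter_upwards [h] with x hx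
    set B : ℝ → ℂ := fun ξ => fhat ⇑f ξ * Complex.exp (Complex.I * (x:ℂ) * (ξ:ℂ)) with hB
    set A : ℝ → ℝ → ℂ := fun t ξ =>
      fhat ⇑f ξ * Complex.exp (Complex.I * ((x - t ^ β : ℝ) : ℂ) * (ξ:ℂ))
        * Complex.exp (Complex.I * ((t * |ξ| ^ a : ℝ) : ℂ))
        * Complex.exp (-((t ^ γ * |ξ| ^ a : ℝ) : ℂ)) with hA
    have hAB : ∀ t ξ : ℝ, A t ξ = B ξ * Complex.exp (srrcZ a γ β t ξ) := by
      intro t ξ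
      have hx2 := srrc_exp_combine a γ β x t ξ
      rw [hA, hB]
      simp only
      calc fhat ⇑f ξ * Complex.exp (Complex.I * ((x - t ^ β : ℝ) : ℂ) * (ξ:ℂ))
            * Complex.exp (Complex.I * ((t * |ξ| ^ a : ℝ) : ℂ))
            * Complex.exp (-((t ^ γ * |ξ| ^ a : ℝ) : ℂ))
          = fhat ⇑f ξ * (Complex.exp (Complex.I * ((x - t ^ β : ℝ) : ℂ) * (ξ:ℂ))
            * Complex.exp (Complex.I * ((t * |ξ| ^ a : ℝ) : ℂ))
            * Complex.exp (-((t ^ γ * |ξ| ^ a : ℝ) : ℂ))) := by ring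
        _ = fhat ⇑f ξ * (Complex.exp (Complex.I * (x:ℂ) * (ξ:ℂ))
            * Complex.exp (srrcZ a γ β t ξ)) := by rw [hx2]
        _ = fhat ⇑f ξ * Complex.exp (Complex.I * (x:ℂ) * (ξ:ℂ))
            * Complex.exp (srrcZ a γ β t ξ) := by ring
    have hnormB : ∀ ξ : ℝ, ‖B ξ‖ = ‖fhat ⇑f ξ‖ := by
      intro ξ
      simp only [hB, norm_mul, srrc_norm_exp_I_mul, mul_one]
    have hBc : Continuous B :=
      hfc.mul (Complex.continuous_exp.comp (continuous_const.mul Complex.continuous_ofReal))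
    have hB_int : Integrable B := by
      refine hfhat_int.norm.mono' hBc.aestronglyMeasurable
        (Filter.Eventually.of_forall fun ξ => ?_)
      simpa using (hnormB ξ).le
    have hAc : ∀ t : ℝ, Continuous (A t) := by
      intro t
      rw [hA]
      exact ((hfc.mul (Complex.continuous_exp.comp
          (continuous_const.mul Complex.continuous_ofReal))).mul
        (Complex.continuous_exp.comp (continuous_const.mul
          (Complex.continuous_ofReal.comp (continuous_const.mul habs))))).mul
        (Complex.continuous_exp.comp
          ((Complex.continuous_ofReal.comp (continuous_const.mul habs)).neg))
    have hA_int : ∀ t : ℝ, 0 < t → Integrable (A t) := by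
      intro t ht
      refine hfhat_int.norm.mono' (hAc t).aestronglyMeasurable
        (Filter.Eventually.of_forall fun ξ => ?_)
      simp only [hA, norm_mul, srrc_norm_exp_I_mul, srrc_norm_exp_I, mul_one]
      have h3 : ‖Complex.exp (-((t ^ γ * |ξ| ^ a : ℝ) : ℂ))‖ ≤ 1 :=
        srrc_norm_exp_neg_le
          (mul_nonneg (Real.rpow_nonneg ht.le γ) (Real.rpow_nonneg (abs_nonneg ξ) a))
      nlinarith [norm_nonneg (fhat ⇑f ξ), norm_nonneg (Complex.exp (-((t ^ γ * |ξ| ^ a : ℝ) : ℂ)))]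
    have hfx : f x = c * ∫ ξ : ℝ, B ξ := by
      simp only [hB]
      rw [srrc_inversion f x, ← mul_assoc, hc2π, one_mul]
    have hland : ∀ t : ℝ, landau a γ (⇑f) t (x - t ^ β) = c * ∫ ξ : ℝ, A t ξ := fun t => rfl
    have hFeq : ∀ᶠ t in nhdsWithin (0:ℝ) (Set.Ioi 0),
        (landau a γ (⇑f) t (x - t ^ β) - f x) / ((t ^ (min β γ) : ℝ) : ℂ)
          = c * ∫ ξ : ℝ, (A t ξ - B ξ) / ((t ^ (min β γ) : ℝ) : ℂ) := by
      filter_upwards [self_mem_nhdsWithin] with t ht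
      have ht0 : (0:ℝ) < t := ht
      rw [hland t, hfx, ← mul_sub, ← integral_sub (hA_int t ht0) hB_int, mul_div_assoc,
        ← integral_div]
    have hDCT : Tendsto (fun t : ℝ => ∫ ξ : ℝ, (A t ξ - B ξ) / ((t ^ (min β γ) : ℝ) : ℂ))
        (nhdsWithin (0:ℝ) (Set.Ioi 0)) (nhds (∫ ξ : ℝ, B ξ * srrcLim a γ β ξ)) := by
      apply tendsto_integral_filter_of_dominated_convergence
        (bound := fun ξ : ℝ => ‖fhat ⇑f ξ‖ * (3 * (1 + |ξ| ^ (max 1 ⌈a⌉₊))))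
      · filter_upwards [self_mem_nhdsWithin] with t ht
        exact (((hAc t).sub hBc).div_const _).aestronglyMeasurable
      · filter_upwards [Ioo_mem_nhdsGT_of_mem (Set.left_mem_Ico.2 one_pos)] with t ht
        refine Filter.Eventually.of_forall fun ξ => ?_
        have htm : (0:ℝ) < t ^ (min β γ) := Real.rpow_pos_of_pos ht.1 _
        have hre : (srrcZ a γ β t ξ).re ≤ 0 := by
          rw [srrcZ_re]
          have := mul_nonneg (Real.rpow_nonneg ht.1.le γ) (Real.rpow_nonneg (abs_nonneg ξ) a)
          linarith
        have hz1 : ‖Complex.exp (srrcZ a γ β t ξ) - 1‖ ≤ ‖srrcZ a γ β t ξ‖ :=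
          srrc_exp_bound hre
        have hz2 := srrcZ_norm_le (a := a) (γ := γ) (β := β) ht.1.le ξ
        have hra : (0:ℝ) ≤ |ξ| ^ a := Real.rpow_nonneg (abs_nonneg ξ) a
        have hz3 : t * |ξ| ^ a + t ^ β * |ξ| + t ^ γ * |ξ| ^ a
            ≤ t ^ (min β γ) * (|ξ| + 2 * |ξ| ^ a) := by
          have e1 : t ≤ t ^ (min β γ) := by
            have := Real.rpow_le_rpow_of_exponent_ge ht.1 ht.2.le hm1
            rwa [Real.rpow_one] at this
          have e2 : t ^ β ≤ t ^ (min β γ) :=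
            Real.rpow_le_rpow_of_exponent_ge ht.1 ht.2.le hmβ
          have e3 : t ^ γ ≤ t ^ (min β γ) :=
            Real.rpow_le_rpow_of_exponent_ge ht.1 ht.2.le hmγ
          have b1 := mul_le_mul_of_nonneg_right e1 hra
          have b2 := mul_le_mul_of_nonneg_right e2 (abs_nonneg ξ)
          have b3 := mul_le_mul_of_nonneg_right e3 hra
          nlinarith
        have hq : ‖Complex.exp (srrcZ a γ β t ξ) - 1‖
            ≤ t ^ (min β γ) * (|ξ| + 2 * |ξ| ^ a) := hz1.trans (hz2.trans hz3)
        have hdiv : ‖Complex.exp (srrcZ a γ β t ξ) - 1‖ / t ^ (min β γ)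
            ≤ |ξ| + 2 * |ξ| ^ a := by
          rw [div_le_iff₀ htm]
          linarith [hq]
        have hpoly := srrc_poly_bound ha ξ
        have hnorm : ‖(A t ξ - B ξ) / ((t ^ (min β γ) : ℝ) : ℂ)‖
            = ‖fhat ⇑f ξ‖ * (‖Complex.exp (srrcZ a γ β t ξ) - 1‖ / t ^ (min β γ)) := by
          rw [norm_div, Complex.norm_real, Real.norm_eq_abs, abs_of_pos htm]
          rw [show A t ξ - B ξ = B ξ * (Complex.exp (srrcZ a γ β t ξ) - 1) by
            rw [hAB t ξ]; ring]
          rw [norm_mul, hnormB, mul_div_assoc]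
        rw [hnorm]
        exact mul_le_mul_of_nonneg_left (hdiv.trans hpoly) (norm_nonneg _)
      · refine (hMaster.const_mul 3).congr (Filter.Eventually.of_forall fun ξ => ?_)
        dsimp only
        ring
      · filter_upwards [hξae] with ξ hξ
        have hzne : ∀ t : ℝ, t ∈ Set.Ioi (0:ℝ) → srrcZ a γ β t ξ ≠ 0 :=
          fun t ht => srrcZ_ne_zero ha ht hξ
        have hz𝓝 : Tendsto (fun t => srrcZ a γ β t ξ) (nhdsWithin (0:ℝ) (Set.Ioi 0))
            (nhdsWithin (0:ℂ) {(0:ℂ)}ᶜ) := by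
          refine tendsto_nhdsWithin_iff.2 ⟨srrcZ_tendsto_zero hβ0 hγ ξ, ?_⟩
          filter_upwards [self_mem_nhdsWithin] with t ht
          exact hzne t ht
        have hfac1 : Tendsto
            (fun t => (Complex.exp (srrcZ a γ β t ξ) - 1) / srrcZ a γ β t ξ)
            (nhdsWithin (0:ℝ) (Set.Ioi 0)) (nhds 1) := srrc_exp_slope.comp hz𝓝
        have hfac2 := srrcZ_div_tendsto (a := a) hβ0 hβ1 hγ ξ
        have hmul := (tendsto_const_nhds (x := B ξ)).mul (hfac1.mul hfac2)
        rw [one_mul] at hmul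
        refine hmul.congr' ?_
        filter_upwards [self_mem_nhdsWithin] with t ht
        have hzn := hzne t ht
        have htm : ((t ^ (min β γ) : ℝ) : ℂ) ≠ 0 :=
          Complex.ofReal_ne_zero.2 (Real.rpow_pos_of_pos ht _).ne'
        rw [hAB t ξ]
        field_simp
    have htend : Tendsto
        (fun t : ℝ => (landau a γ (⇑f) t (x - t ^ β) - f x) / ((t ^ (min β γ) : ℝ) : ℂ))
        (nhdsWithin (0:ℝ) (Set.Ioi 0))
        (nhds (c * ∫ ξ : ℝ, B ξ * srrcLim a γ β ξ)) :=
      (hDCT.const_mul c).congr' (hFeq.mono fun t ht => ht.symm)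
    have huniq : (0:ℂ) = c * ∫ ξ : ℝ, B ξ * srrcLim a γ β ξ :=
      tendsto_nhds_unique hx htend
    have hI0 : ∫ ξ : ℝ, B ξ * srrcLim a γ β ξ = 0 := by
      rcases mul_eq_zero.1 huniq.symm with h0 | h0
      · exact absurd h0 hc_ne
      · exact h0
    rw [show (fun ξ : ℝ => (fhat ⇑f ξ * srrcLim a γ β ξ)
        * Complex.exp (Complex.I * (x:ℂ) * (ξ:ℂ))) = fun ξ : ℝ => B ξ * srrcLim a γ β ξ
      from funext fun ξ => by rw [hB]; ring]
    exact hI0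
  -- deduce fhat f * Lim = 0 everywhere
  have hGc : Continuous (fun ξ : ℝ => fhat ⇑f ξ * srrcLim a γ β ξ) :=
    hfc.mul (srrcLim_cont ha)
  have hGi : Integrable (fun ξ : ℝ => fhat ⇑f ξ * srrcLim a γ β ξ) := by
    refine (hMaster.const_mul 3).mono' hGc.aestronglyMeasurable
      (Filter.Eventually.of_forall fun ξ => ?_)
    rw [norm_mul]
    have h1 := srrcLim_norm_le (a := a) (γ := γ) (β := β) ξ
    have h2 := srrc_poly_bound ha ξ
    have h3 := mul_le_mul_of_nonneg_left (h1.trans h2) (norm_nonneg (fhat ⇑f ξ))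
    refine h3.trans (le_of_eq ?_)
    ring
  have hG0 := srrc_eq_zero_of_integral hGc hGi hae
  have hfhat0 : ∀ ξ : ℝ, fhat ⇑f ξ = 0 := by
    have hne : ∀ ξ : ℝ, ξ ≠ 0 → fhat ⇑f ξ = 0 := by
      intro ξ hξ
      rcases mul_eq_zero.1 (hG0 ξ) with h0 | h0
      · exact h0
      · exact absurd h0 (srrcLim_ne_zero ha hβ0 hβ1 hγ hξ)
    have hfae : fhat ⇑f =ᵐ[volume] (fun _ => 0) := by
      filter_upwards [hξae] with ξ hξ
      exact hne ξ hξ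
    have := (hfc.ae_eq_iff_eq (μ := volume) continuous_const).1 hfae
    exact fun ξ => congrFun this ξ
  have h𝓕f : 𝓕 ⇑f = fun _ => 0 := by
    funext w
    have hfe := srrc_fhat_eq ⇑f (2 * Real.pi * w)
    rw [hfhat0, show (2 * Real.pi * w) / (2 * Real.pi) = w by field_simp] at hfe
    exact hfe.symm
  intro x
  have hint0 : Integrable (𝓕 ⇑f) := by
    rw [h𝓕f]; exact integrable_zero _ _ _
  have hinv := f.continuous.fourierInv_fourier_eq f.integrable hint0
  have hfin := congrFun hinv x
  rw [h𝓕f, srrc_finv_zero] at hfin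
  exact hfin.symm
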